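/- Let k be a perfect field, B a finitely generated k-algebra, and A a B-algebra which is essentially of finite type over B (not necessarily flat). Then for every prime ideal 𝔮 of B one has gldim(A ⊗_B k(𝔮)) ≤ gldim(A,B), i.e., the (absolute) global dimension of each fiber ring is bounded above by the relative global dimension. -/

import Mathlib

open TensorProduct DirectSum

section RelDefs

variable (S R : Type) [CommRing S] [CommRing R] [Algebra S R]

/-- A bundled module over the ring extension `S → R`. -/
structure RelModule where
  carrier : Type
  [isAddCommGroup : AddCommGroup carrier]
  [isModuleBase : Module S carrier]
  [isModuleTop : Module R carrier]
  [isTower : IsScalarTower S R carrier]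

attribute [instance] RelModule.isAddCommGroup RelModule.isModuleBase
  RelModule.isModuleTop RelModule.isTower

/-- The multiplication map `R ⊗[S] M → M`, `r ⊗ m ↦ r • m`. -/
noncomputable def relMul (M : Type) [AddCommGroup M] [Module S M] [Module R M]
    [IsScalarTower S R M] : R ⊗[S] M →ₗ[R] M :=
  LinearMap.liftBaseChange R LinearMap.id

/-- `M` is relatively `S`-projective (i.e. `(R,S)`-projective): the multiplication map
`R ⊗[S] M → M` is a split epimorphism of `R`-modules. -/
noncomputable def IsRelProjective (M : Type) [AddCommGroup M] [Module S M] [Module R M]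
    [IsScalarTower S R M] : Prop :=
  ∃ s : M →ₗ[R] R ⊗[S] M, (relMul S R M).comp s = LinearMap.id

/-- `P, f, g` form an `(R,S)`-exact resolution of `M` by `(R,S)`-projective modules:
`⋯ → P 1 → P 0 → M → 0` is exact, the kernel of each map is a direct `S`-module summand
of its domain, and each `P i` is `(R,S)`-projective. -/
noncomputable def IsRelResolution (M : RelModule S R) (P : ℕ → RelModule S R)
    (f : ∀ i, (P (i + 1)).carrier →ₗ[R] (P i).carrier)
    (g : (P 0).carrier →ₗ[R] M.carrier) : Prop :=
  (∀ i, IsRelProjective S R (P i).carrier) ∧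
  Function.Surjective g ∧
  Function.Exact (f 0) g ∧
  (∀ i, Function.Exact (f (i + 1)) (f i)) ∧
  (∃ q, IsCompl ((LinearMap.ker g).restrictScalars S) q) ∧
  (∀ i, ∃ q, IsCompl ((LinearMap.ker (f i)).restrictScalars S) q)

/-- The relative projective dimension `pd_{(R,S)} M`: the least length of an `(R,S)`-exact
resolution of `M` by `(R,S)`-projectives (`⊤` if there is none). -/
noncomputable def relPd (M : RelModule S R) : ℕ∞ :=
  sInf {n : ℕ∞ | ∃ k : ℕ, n = (k : ℕ∞) ∧
    ∃ (P : ℕ → RelModule S R) (f : ∀ i, (P (i + 1)).carrier →ₗ[R] (P i).carrier)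
      (g : (P 0).carrier →ₗ[R] M.carrier),
      IsRelResolution S R M P f g ∧ ∀ i, k ≤ i → Subsingleton (P (i + 1)).carrier}

/-- The relative global dimension `gldim(R,S)`: the supremum of the relative projective
dimensions of all `R`-modules. -/
noncomputable def relGldim : ℕ∞ := ⨆ M : RelModule S R, relPd S R M

end RelDefs

section AbsDefs

variable (R : Type) [CommRing R]

/-- A bundled `R`-module. -/
structure ModuleOver where
  carrier : Type
  [isAddCommGroup : AddCommGroup carrier]
  [isModule : Module R carrier]

attribute [instance] ModuleOver.isAddCommGroup ModuleOver.isModule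

/-- `P, f, g` form a projective resolution `⋯ → P 1 → P 0 → M → 0` of `M`. -/
noncomputable def IsProjResolution (M : ModuleOver R) (P : ℕ → ModuleOver R)
    (f : ∀ i, (P (i + 1)).carrier →ₗ[R] (P i).carrier)
    (g : (P 0).carrier →ₗ[R] M.carrier) : Prop :=
  (∀ i, Module.Projective R (P i).carrier) ∧
  Function.Surjective g ∧
  Function.Exact (f 0) g ∧
  (∀ i, Function.Exact (f (i + 1)) (f i))

/-- The projective dimension of the `R`-module `M`: the least length of a projective
resolution of `M` (`⊤` if there is none). -/
noncomputable def modulePd (M : ModuleOver R) : ℕ∞ :=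
  sInf {n : ℕ∞ | ∃ k : ℕ, n = (k : ℕ∞) ∧
    ∃ (P : ℕ → ModuleOver R) (f : ∀ i, (P (i + 1)).carrier →ₗ[R] (P i).carrier)
      (g : (P 0).carrier →ₗ[R] M.carrier),
      IsProjResolution R M P f g ∧ ∀ i, k ≤ i → Subsingleton (P (i + 1)).carrier}

/-- The (absolute) global dimension of the ring `R`. -/
noncomputable def ringGldim : ℕ∞ := ⨆ M : ModuleOver R, modulePd R M

end AbsDefs

section ResField

/-- The residue field `k(q) = B_q / q B_q` of a prime ideal `q`. -/
noncomputable abbrev resField (B : Type) [CommRing B] (q : Ideal B) [q.IsPrime] : Type :=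
  IsLocalRing.ResidueField (Localization.AtPrime q)

noncomputable instance (B : Type) [CommRing B] (q : Ideal B) [q.IsPrime] :
    Algebra B (resField B q) :=
  ((IsLocalRing.residue (Localization.AtPrime q)).comp
    (algebraMap B (Localization.AtPrime q))).toAlgebra

noncomputable instance (B : Type) [CommRing B] (q : Ideal B) [q.IsPrime] :
    Module B (resField B q) :=
  Algebra.toModule

end ResField

/-!
Statement 13: Let `k` be a perfect field, `B` a finitely generated `k`-algebra, and `A` a
`B`-algebra, essentially of finite type over `B` (not necessarily flat).  Then for every
prime ideal `𝔮` of `B` one has `gldim(A ⊗_B k(𝔮)) ≤ gldim(A,B)`.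
-/

section MyHelpers

section OneRing
variable {R M N P : Type} [CommRing R] [AddCommGroup M] [AddCommGroup N] [AddCommGroup P]
  [Module R M] [Module R N] [Module R P]

/-- From a complement of the kernel, get a section of `f` defined on its range. -/
lemma exists_range_section (f : M →ₗ[R] N) (W : Submodule R M)
    (hW : IsCompl (LinearMap.ker f) W) :
    ∃ ρ : (LinearMap.range f : Submodule R N) →ₗ[R] M, ∀ y : LinearMap.range f, f (ρ y) = y := by
  let φ : W →ₗ[R] LinearMap.range f :=
    LinearMap.codRestrict _ (f ∘ₗ W.subtype) (fun v => LinearMap.mem_range_self _ _)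
  have hφ : ∀ w : W, (φ w : N) = f w := fun w => rfl
  have hinj : Function.Injective φ := by
    intro v w h
    have h' : f ((v : M) - w) = 0 := by
      rw [map_sub, sub_eq_zero, ← hφ, ← hφ, h]
    have hmem : ((v : M) - w) ∈ LinearMap.ker f ⊓ W := ⟨h', sub_mem v.2 w.2⟩
    rw [hW.inf_eq_bot, Submodule.mem_bot, sub_eq_zero] at hmem
    exact Subtype.ext hmem
  have hsurj : Function.Surjective φ := by
    rintro ⟨y, x, rfl⟩
    set π := Submodule.projectionOnto W (LinearMap.ker f) hW.symm with hπ
    refine ⟨π x, Subtype.ext ?_⟩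
    have h1 : π (x - (π x : M)) = 0 := by
      rw [map_sub, Submodule.projectionOnto_apply_left, sub_self]
    have h2 : x - (π x : M) ∈ LinearMap.ker f :=
      (Submodule.projectionOnto_apply_eq_zero_iff hW.symm).mp h1
    have h3 : f x = f (π x : M) := by
      have := LinearMap.mem_ker.mp h2
      rw [map_sub, sub_eq_zero] at this
      exact this
    exact (hφ _).trans h3.symm
  let e := LinearEquiv.ofBijective φ ⟨hinj, hsurj⟩
  refine ⟨W.subtype ∘ₗ e.symm.toLinearMap, fun y => ?_⟩
  have h : φ (e.symm y) = y := e.apply_symm_apply y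
  have := congrArg (Subtype.val) h
  rw [hφ] at this
  exact this

/-- From complements of kernel and range, get a weak section `τ` with `g ∘ τ ∘ g = g`. -/
lemma exists_weak_section (g : M →ₗ[R] N) (V : Submodule R M) (U : Submodule R N)
    (hV : IsCompl (LinearMap.ker g) V) (hU : IsCompl (LinearMap.range g) U) :
    ∃ τ : N →ₗ[R] M, ∀ x, g (τ (g x)) = g x := by
  obtain ⟨ρ, hρ⟩ := exists_range_section g V hV
  refine ⟨ρ ∘ₗ Submodule.linearProjOfIsCompl _ U hU, fun x => ?_⟩
  have h1 : Submodule.linearProjOfIsCompl _ U hU (g x)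
      = ⟨g x, LinearMap.mem_range_self _ _⟩ :=
    Submodule.linearProjOfIsCompl_apply_left hU ⟨g x, LinearMap.mem_range_self _ _⟩
  simp only [LinearMap.comp_apply, h1, hρ]

/-- From exactness, a complement of the kernel of `f`, and a weak section of `g`,
get a contracting homotopy at the middle spot. -/
lemma exists_homotopy (f : M →ₗ[R] N) (g : N →ₗ[R] P) (hfg : Function.Exact f g)
    (W : Submodule R M) (hW : IsCompl (LinearMap.ker f) W)
    (τ : P →ₗ[R] N) (hτ : ∀ x, g (τ (g x)) = g x) :
    ∃ σ : N →ₗ[R] M, ∀ x, f (σ x) + τ (g x) = x := by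
  obtain ⟨ρ, hρ⟩ := exists_range_section f W hW
  have hker : LinearMap.ker g = LinearMap.range f := LinearMap.exact_iff.mp hfg
  have hmem : ∀ x : N, x - τ (g x) ∈ LinearMap.range f := by
    intro x
    rw [← hker, LinearMap.mem_ker, map_sub, hτ, sub_self]
  let π : N →ₗ[R] (LinearMap.range f : Submodule R N) :=
    LinearMap.codRestrict _ (LinearMap.id - τ ∘ₗ g) hmem
  refine ⟨ρ ∘ₗ π, fun x => ?_⟩
  have h1 : f (ρ (π x)) = x - τ (g x) := hρ (π x)
  rw [LinearMap.comp_apply, h1, sub_add_cancel]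

/-- A middle homotopy makes `lTensor` exact. -/
lemma lTensor_exact_of_homotopy (Q : Type) [AddCommGroup Q] [Module R Q]
    (f : M →ₗ[R] N) (g : N →ₗ[R] P) (hc : g ∘ₗ f = 0)
    (σ : N →ₗ[R] M) (τ : P →ₗ[R] N) (h : ∀ x, f (σ x) + τ (g x) = x) :
    Function.Exact (LinearMap.lTensor Q f) (LinearMap.lTensor Q g) := by
  have key : (LinearMap.lTensor Q f) ∘ₗ (LinearMap.lTensor Q σ)
      + (LinearMap.lTensor Q τ) ∘ₗ (LinearMap.lTensor Q g) = LinearMap.id := by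
    have h2 : f ∘ₗ σ + τ ∘ₗ g = LinearMap.id := LinearMap.ext h
    rw [← LinearMap.lTensor_comp, ← LinearMap.lTensor_comp, ← LinearMap.lTensor_add, h2,
      LinearMap.lTensor_id]
  intro y
  constructor
  · intro hy
    refine ⟨LinearMap.lTensor Q σ y, ?_⟩
    have := congrArg (fun φ : _ →ₗ[R] _ => φ y) key
    simp only [LinearMap.add_apply, LinearMap.comp_apply, LinearMap.id_apply] at this
    rw [hy, map_zero, add_zero] at this
    exact this
  · rintro ⟨x, rfl⟩
    rw [← LinearMap.comp_apply, ← LinearMap.lTensor_comp, hc, LinearMap.lTensor_zero,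
      LinearMap.zero_apply]
end OneRing

lemma exact_of_conj {α β γ α' β' γ' : Type} [Zero γ] [Zero γ']
    {f : α → β} {g : β → γ} {f' : α' → β'} {g' : β' → γ'}
    (eA : α ≃ α') (eB : β ≃ β') (eC : γ → γ') (hC : ∀ z, eC z = 0 ↔ z = 0)
    (h1 : ∀ a, f' (eA a) = eB (f a)) (h2 : ∀ b, g' (eB b) = eC (g b))
    (H : Function.Exact f g) : Function.Exact f' g' := by
  intro y'
  obtain ⟨y, rfl⟩ := eB.surjective y'
  rw [h2, hC]
  constructor
  · intro h
    obtain ⟨x, hx⟩ := (H y).mp h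
    exact ⟨eA x, by rw [h1, hx]⟩
  · rintro ⟨x', hx'⟩
    obtain ⟨x, rfl⟩ := eA.surjective x'
    exact (H y).mpr ⟨x, eB.injective (by rw [← h1, hx'])⟩

section Conj
variable {R M N P Q : Type} [CommRing R] [AddCommGroup M] [AddCommGroup N] [AddCommGroup P]
  [AddCommGroup Q] [Module R M] [Module R N] [Module R P] [Module R Q]

lemma exact_comp_injective (f : M →ₗ[R] N) (g : N →ₗ[R] P) (e : P →ₗ[R] Q)
    (he : Function.Injective e) (H : Function.Exact f g) :
    Function.Exact f (e ∘ₗ g) := by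
  intro y
  rw [LinearMap.comp_apply, LinearMap.map_eq_zero_iff e he]
  exact H y

lemma subsingleton_tensor (X : Type) [AddCommGroup X] [Module R X] (C : Type) [AddCommGroup C]
    [Module R C] (h : Subsingleton X) : Subsingleton (C ⊗[R] X) := by
  refine ⟨fun a b => ?_⟩
  have key : ∀ z : C ⊗[R] X, z = 0 := by
    intro z
    induction z using TensorProduct.induction_on with
    | zero => rfl
    | tmul c x => rw [Subsingleton.elim x 0, TensorProduct.tmul_zero]
    | add u v hu hv => rw [hu, hv, add_zero]
  rw [key a, key b]
end Conj

section Eta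
variable (B A K : Type) [CommRing B] [CommRing A] [Algebra B A] [CommRing K] [Algebra B K]
variable (M : Type) [AddCommGroup M] [Module B M] [Module A M] [IsScalarTower B A M]

/-- The natural identification `(A ⊗[B] K) ⊗[A] M ≃ K ⊗[B] M`. -/
noncomputable def etaEquiv : (A ⊗[B] K) ⊗[A] M ≃ₗ[B] K ⊗[B] M :=
  ((TensorProduct.comm A (A ⊗[B] K) M).restrictScalars B) ≪≫ₗ
  ((TensorProduct.AlgebraTensorModule.cancelBaseChange B A A M K).restrictScalars B) ≪≫ₗ
  (TensorProduct.comm B M K)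

variable {M}
variable {M' : Type} [AddCommGroup M'] [Module B M'] [Module A M'] [IsScalarTower B A M']

lemma etaEquiv_tmul (a : A) (x : K) (m : M) :
    etaEquiv B A K M ((a ⊗ₜ[B] x) ⊗ₜ[A] m) = x ⊗ₜ[B] (a • m) := by
  simp [etaEquiv]

lemma eta_natural (φ : M →ₗ[A] M') (z : (A ⊗[B] K) ⊗[A] M) :
    etaEquiv B A K M' (φ.baseChange (A ⊗[B] K) z)
      = LinearMap.lTensor K (φ.restrictScalars B) (etaEquiv B A K M z) := by
  induction z using TensorProduct.induction_on with
  | zero => simp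
  | tmul c m =>
    induction c using TensorProduct.induction_on with
    | zero => simp
    | tmul a x => simp [etaEquiv_tmul]
    | add u v hu hv =>
      rw [TensorProduct.add_tmul, map_add, map_add, hu, hv, ← map_add, ← map_add]
  | add u v hu hv => rw [map_add, map_add, hu, hv, ← map_add, ← map_add]
end Eta

section BCExact
variable (B A K : Type) [CommRing B] [CommRing A] [Algebra B A] [CommRing K] [Algebra B K]
variable {M₂ M₁ M₀ : Type} [AddCommGroup M₂] [AddCommGroup M₁] [AddCommGroup M₀]
  [Module B M₂] [Module A M₂] [IsScalarTower B A M₂]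
  [Module B M₁] [Module A M₁] [IsScalarTower B A M₁]
  [Module B M₀] [Module A M₀] [IsScalarTower B A M₀]

lemma baseChange_exact_of_splittings
    (f : M₂ →ₗ[A] M₁) (g : M₁ →ₗ[A] M₀) (hfg : Function.Exact f g)
    (W : Submodule B M₂) (hW : IsCompl ((LinearMap.ker f).restrictScalars B) W)
    (V : Submodule B M₁) (hV : IsCompl ((LinearMap.ker g).restrictScalars B) V)
    (U : Submodule B M₀) (hU : IsCompl ((LinearMap.range g).restrictScalars B) U) :
    Function.Exact (f.baseChange (A ⊗[B] K)) (g.baseChange (A ⊗[B] K)) := by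
  set fB := f.restrictScalars B with hfB
  set gB := g.restrictScalars B with hgB
  have hkf : LinearMap.ker fB = (LinearMap.ker f).restrictScalars B := by
    ext x
    simp only [LinearMap.mem_ker, Submodule.restrictScalars_mem]
    rfl
  have hkg : LinearMap.ker gB = (LinearMap.ker g).restrictScalars B := by
    ext x
    simp only [LinearMap.mem_ker, Submodule.restrictScalars_mem]
    rfl
  have hrg : LinearMap.range gB = (LinearMap.range g).restrictScalars B := by
    ext x
    simp only [LinearMap.mem_range, Submodule.restrictScalars_mem]
    rfl
  obtain ⟨τ, hτ⟩ := exists_weak_section gB V U (hkg ▸ hV) (hrg ▸ hU)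
  have hfgB : Function.Exact fB gB := hfg
  obtain ⟨σ, hσ⟩ := exists_homotopy fB gB hfgB W (hkf ▸ hW) τ hτ
  have hc : gB ∘ₗ fB = 0 := LinearMap.ext fun x => hfg.apply_apply_eq_zero x
  have hex := lTensor_exact_of_homotopy K fB gB hc σ τ hσ
  refine exact_of_conj (f := ⇑(LinearMap.lTensor K fB)) (g := ⇑(LinearMap.lTensor K gB))
    (etaEquiv B A K M₂).symm.toEquiv (etaEquiv B A K M₁).symm.toEquiv
    (⇑(etaEquiv B A K M₀).symm) (fun z => ?_) (fun a => ?_) (fun b => ?_) hex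
  · exact LinearEquiv.map_eq_zero_iff _
  · apply (etaEquiv B A K M₁).injective
    simp only [LinearEquiv.coe_toEquiv]
    rw [LinearEquiv.apply_symm_apply]
    exact (eta_natural B A K f _).trans (by rw [LinearEquiv.apply_symm_apply])
  · apply (etaEquiv B A K M₀).injective
    simp only [LinearEquiv.coe_toEquiv]
    rw [LinearEquiv.apply_symm_apply]
    exact (eta_natural B A K g _).trans (by rw [LinearEquiv.apply_symm_apply])
end BCExact

section Proj
attribute [local instance] Algebra.TensorProduct.rightAlgebra
variable (B A K : Type) [CommRing B] [CommRing A] [Algebra B A] [Field K] [Algebra B K]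
variable (M : Type) [AddCommGroup M] [Module B M] [Module A M] [IsScalarTower B A M]

lemma baseChange_projective_of_relProjective (h : IsRelProjective B A M) :
    Module.Projective (A ⊗[B] K) ((A ⊗[B] K) ⊗[A] M) := by
  obtain ⟨s, hs⟩ := h
  have e1 : (A ⊗[B] K) ⊗[A] (A ⊗[B] M) ≃ₗ[A ⊗[B] K] (A ⊗[B] K) ⊗[B] M :=
    TensorProduct.AlgebraTensorModule.cancelBaseChange B A (A ⊗[B] K) (A ⊗[B] K) M
  have e2 : (A ⊗[B] K) ⊗[K] (K ⊗[B] M) ≃ₗ[A ⊗[B] K] (A ⊗[B] K) ⊗[B] M :=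
    TensorProduct.AlgebraTensorModule.cancelBaseChange B K (A ⊗[B] K) (A ⊗[B] K) M
  haveI p0 : Module.Projective (A ⊗[B] K) ((A ⊗[B] K) ⊗[K] (K ⊗[B] M)) := inferInstance
  haveI p1 : Module.Projective (A ⊗[B] K) ((A ⊗[B] K) ⊗[B] M) := Module.Projective.of_equiv e2
  haveI p2 : Module.Projective (A ⊗[B] K) ((A ⊗[B] K) ⊗[A] (A ⊗[B] M)) :=
    Module.Projective.of_equiv e1.symm
  refine Module.Projective.of_split (s.baseChange (A ⊗[B] K))
    ((relMul B A M).baseChange (A ⊗[B] K)) ?_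
  rw [← LinearMap.baseChange_comp, hs, LinearMap.baseChange_id]
end Proj

section Surj
variable {A : Type} [CommRing A] {M N : Type} [AddCommGroup M] [AddCommGroup N]
  [Module A M] [Module A N]

lemma baseChange_surjective (C : Type) [CommRing C] [Algebra A C] (f : M →ₗ[A] N)
    (hf : Function.Surjective f) : Function.Surjective (f.baseChange C) := by
  intro z
  induction z using TensorProduct.induction_on with
  | zero => exact ⟨0, map_zero _⟩
  | tmul c n =>
    obtain ⟨m, rfl⟩ := hf n
    exact ⟨c ⊗ₜ m, rfl⟩
  | add u v hu hv =>
    obtain ⟨x, rfl⟩ := hu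
    obtain ⟨y, rfl⟩ := hv
    exact ⟨x + y, map_add _ _ _⟩

lemma relMul_surjective (R : Type) [CommRing R] [Algebra A R] [Module R M]
    [IsScalarTower A R M] : Function.Surjective (relMul A R M) := fun m =>
  ⟨(1 : R) ⊗ₜ m, by simp [relMul, LinearMap.liftBaseChange_tmul]⟩
end Surj

section Residue
variable (B A : Type) [CommRing B] [CommRing A] [Algebra B A]
variable (q : Ideal B) [q.IsPrime]
variable (N : Type) [AddCommGroup N] [Module A N] [Module (A ⊗[B] resField B q) N]
  [IsScalarTower A (A ⊗[B] resField B q) N]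

lemma resField_one_tmul_algebraMap (b : B) (m : N) :
    ((1:A) ⊗ₜ[B] (algebraMap B (resField B q) b)) ⊗ₜ[A] m
      = (1 : A ⊗[B] resField B q) ⊗ₜ[A]
          ((((1:A) ⊗ₜ[B] (algebraMap B (resField B q) b)) : A ⊗[B] resField B q) • m) := by
  have h1 : ((1:A) ⊗ₜ[B] (algebraMap B (resField B q) b) : A ⊗[B] resField B q)
      = algebraMap A (A ⊗[B] resField B q) (algebraMap B A b) := by
    rw [← IsScalarTower.algebraMap_apply B A (A ⊗[B] resField B q) b,
      Algebra.TensorProduct.algebraMap_apply']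
  have h2 : algebraMap A (A ⊗[B] resField B q) (algebraMap B A b) ⊗ₜ[A] m
      = (algebraMap B A b) • ((1 : A ⊗[B] resField B q) ⊗ₜ[A] m) := by
    rw [TensorProduct.smul_tmul', ← Algebra.algebraMap_eq_smul_one]
  conv_lhs => rw [h1, h2]
  rw [h1, algebraMap_smul (A ⊗[B] resField B q) (algebraMap B A b) m, TensorProduct.tmul_smul]

lemma resField_one_tmul_smul (x : resField B q) (m : N) :
    ((1:A) ⊗ₜ[B] x) ⊗ₜ[A] m
      = (1 : A ⊗[B] resField B q) ⊗ₜ[A] ((((1:A) ⊗ₜ[B] x) : A ⊗[B] resField B q) • m) := by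
  obtain ⟨b, s, hbs⟩ : ∃ (b : B) (s : q.primeCompl),
      algebraMap B (resField B q) s * x = algebraMap B (resField B q) b := by
    obtain ⟨y, hy⟩ := IsLocalRing.residue_surjective (R := Localization.AtPrime q) x
    obtain ⟨b, s, hbs⟩ := IsLocalization.exists_mk'_eq q.primeCompl y
    refine ⟨b, s, ?_⟩
    have h0 := IsLocalization.mk'_spec (Localization.AtPrime q) b s
    have h2 := congrArg (IsLocalRing.residue (Localization.AtPrime q)) h0
    rw [map_mul, hbs, hy] at h2
    calc algebraMap B (resField B q) s * x
        = x * IsLocalRing.residue (Localization.AtPrime q)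
            (algebraMap B (Localization.AtPrime q) s) := mul_comm _ _
      _ = algebraMap B (resField B q) b := h2
  have hu : IsUnit (((1:A) ⊗ₜ[B] (algebraMap B (resField B q) s)) : A ⊗[B] resField B q) := by
    have hu1 : IsUnit (algebraMap B (resField B q) s) :=
      (IsLocalization.map_units (Localization.AtPrime q) s).map
        (IsLocalRing.residue (Localization.AtPrime q))
    exact hu1.map (Algebra.TensorProduct.includeRight (R := B) (A := A))
  set u : A ⊗[B] resField B q := (1:A) ⊗ₜ[B] (algebraMap B (resField B q) s) with hu_def
  have hcan : ∀ z w : (A ⊗[B] resField B q) ⊗[A] N, u • z = u • w → z = w := by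
    intro z w h
    have h2 := congrArg (fun t => ((hu.unit⁻¹ : (A ⊗[B] resField B q)ˣ) :
      A ⊗[B] resField B q) • t) h
    simp only [smul_smul, IsUnit.val_inv_mul, one_smul] at h2
    exact h2
  apply hcan
  rw [TensorProduct.smul_tmul', TensorProduct.smul_tmul', smul_eq_mul, smul_eq_mul, hu_def,
    Algebra.TensorProduct.tmul_mul_tmul, one_mul, mul_one, hbs,
    resField_one_tmul_algebraMap B A q N b m,
    resField_one_tmul_algebraMap B A q N s
      ((((1:A) ⊗ₜ[B] x) : A ⊗[B] resField B q) • m),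
    ← mul_smul, Algebra.TensorProduct.tmul_mul_tmul, one_mul, hbs]

lemma relMul_resField_injective :
    Function.Injective (relMul A (A ⊗[B] resField B q) N) := by
  have key3 : ∀ (c : A ⊗[B] resField B q) (m : N),
      c ⊗ₜ[A] m = (1 : A ⊗[B] resField B q) ⊗ₜ[A] (c • m) := by
    intro c m
    induction c using TensorProduct.induction_on with
    | zero => rw [zero_smul, TensorProduct.zero_tmul, TensorProduct.tmul_zero]
    | tmul a x =>
      have ha : (a ⊗ₜ[B] x : A ⊗[B] resField B q) = a • ((1:A) ⊗ₜ[B] x) := by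
        rw [TensorProduct.smul_tmul', smul_eq_mul, mul_one]
      have hcomm : (((1:A) ⊗ₜ[B] x) : A ⊗[B] resField B q) • (a • m)
          = a • ((((1:A) ⊗ₜ[B] x) : A ⊗[B] resField B q) • m) := by
        rw [← algebraMap_smul (A ⊗[B] resField B q) a m, ← mul_smul,
          ← algebraMap_smul (A ⊗[B] resField B q) a
            ((((1:A) ⊗ₜ[B] x) : A ⊗[B] resField B q) • m), ← mul_smul, mul_comm]
      rw [ha, TensorProduct.smul_tmul, resField_one_tmul_smul B A q N x (a • m), hcomm,
        smul_assoc]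
    | add u v hu hv =>
      rw [TensorProduct.add_tmul, hu, hv, add_smul, TensorProduct.tmul_add]
  have hli : ∀ z, (1 : A ⊗[B] resField B q) ⊗ₜ[A] (relMul A (A ⊗[B] resField B q) N z) = z := by
    intro z
    induction z using TensorProduct.induction_on with
    | zero => rw [map_zero, TensorProduct.tmul_zero]
    | tmul c m =>
      rw [relMul, LinearMap.liftBaseChange_tmul, LinearMap.id_apply]
      exact (key3 c m).symm
    | add u v hu hv => rw [map_add, TensorProduct.tmul_add, hu, hv]
  intro z w h
  rw [← hli z, ← hli w, h]
end Residue

end MyHelpers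

theorem fiber_gldim_le_relative_gldim
    (k B A : Type) [Field k] [PerfectField k]
    [CommRing B] [Algebra k B] [Algebra.FiniteType k B]
    [CommRing A] [Algebra B A] [Algebra.EssFiniteType B A] :
    ∀ q : PrimeSpectrum B, ringGldim (A ⊗[B] resField B q.asIdeal) ≤ relGldim B A := by
  intro q
  unfold ringGldim
  refine iSup_le fun N => ?_
  letI modA : Module A N.carrier :=
    Module.compHom N.carrier (algebraMap A (A ⊗[B] resField B q.asIdeal))
  haveI towAC : IsScalarTower A (A ⊗[B] resField B q.asIdeal) N.carrier := by
    constructor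
    intro a c n
    show (a • c) • n = algebraMap A (A ⊗[B] resField B q.asIdeal) a • (c • n)
    rw [Algebra.smul_def, mul_smul]
  letI modB : Module B N.carrier := Module.compHom N.carrier (algebraMap B A)
  haveI towBA : IsScalarTower B A N.carrier := by
    constructor
    intro b a n
    show (b • a) • n = b • a • n
    rw [Algebra.smul_def b a]
    show (algebraMap A (A ⊗[B] resField B q.asIdeal) ((algebraMap B A b) * a)) • n
      = (algebraMap A (A ⊗[B] resField B q.asIdeal) (algebraMap B A b)) •
        ((algebraMap A (A ⊗[B] resField B q.asIdeal) a) • n)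
    rw [map_mul, mul_smul]
  let N' : RelModule B A := ⟨N.carrier⟩
  have hmain : modulePd (A ⊗[B] resField B q.asIdeal) N ≤ relPd B A N' := by
    unfold modulePd relPd
    refine sInf_le_sInf ?_
    rintro n ⟨kk, rfl, P, f, g, ⟨hproj, hsurj, hex0, hexi, ⟨V₀, hV₀⟩, hker⟩, hfin⟩
    choose W hW using hker
    refine ⟨kk, rfl, fun i => ⟨(A ⊗[B] resField B q.asIdeal) ⊗[A] (P i).carrier⟩,
      fun i => (f i).baseChange _,
      (relMul A (A ⊗[B] resField B q.asIdeal) N.carrier) ∘ₗ (g.baseChange _),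
      ⟨?_, ?_, ?_, ?_⟩, ?_⟩
    · intro i
      exact baseChange_projective_of_relProjective B A (resField B q.asIdeal) (P i).carrier
        (hproj i)
    · exact (relMul_surjective (A ⊗[B] resField B q.asIdeal)).comp
        (baseChange_surjective _ g hsurj)
    · have hbc0 : Function.Exact ((f 0).baseChange (A ⊗[B] resField B q.asIdeal))
          (g.baseChange (A ⊗[B] resField B q.asIdeal)) := by
        refine baseChange_exact_of_splittings B A (resField B q.asIdeal) (f 0) g hex0
          (W 0) (hW 0) V₀ hV₀ ⊥ ?_
        have h1 : (LinearMap.range g).restrictScalars B = (⊤ : Submodule B N'.carrier) := by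
          rw [LinearMap.range_eq_top.mpr hsurj]
          rfl
        rw [h1]
        exact isCompl_top_bot
      exact exact_comp_injective _ _ _
        (relMul_resField_injective B A q.asIdeal N.carrier) hbc0
    · intro i
      match i with
      | 0 =>
        exact baseChange_exact_of_splittings B A (resField B q.asIdeal) (f 1) (f 0) (hexi 0)
          (W 1) (hW 1) (W 0) (hW 0) V₀
          (by rw [← LinearMap.exact_iff.mp hex0]; exact hV₀)
      | Nat.succ j =>
        exact baseChange_exact_of_splittings B A (resField B q.asIdeal) (f (j + 2)) (f (j + 1))
          (hexi (j + 1)) (W (j + 2)) (hW (j + 2)) (W (j + 1)) (hW (j + 1)) (W j)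
          (by rw [← LinearMap.exact_iff.mp (hexi j)]; exact hW j)
    · intro i hi
      exact subsingleton_tensor (P (i + 1)).carrier _ (hfin i hi)
  refine le_trans hmain ?_
  unfold relGldim
  exact le_iSup (relPd B A) N'
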